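/- If two elements g and h of a group both have order a power of the same prime p, then g and h are adjacent in the power graph if and only if they are adjacent in the enhanced power graph. -/

import Mathlib

def powerGraph (G : Type*) [Group G] : SimpleGraph G where
  Adj x y := x ≠ y ∧ ((∃ n : ℤ, n ≠ 0 ∧ y = x ^ n) ∨ ∃ n : ℤ, n ≠ 0 ∧ x = y ^ n)
  symm := ⟨fun _ _ ⟨h, h2⟩ => ⟨h.symm, h2.symm⟩⟩
  loopless := ⟨fun _ ⟨h, _⟩ => h rfl⟩

def enhancedPowerGraph (G : Type*) [Group G] : SimpleGraph G where
  Adj x y := x ≠ y ∧ ∃ z : G, x ∈ Subgroup.zpowers z ∧ y ∈ Subgroup.zpowers z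
  symm := ⟨fun _ _ ⟨h, z, hx, hy⟩ => ⟨h.symm, z, hy, hx⟩⟩
  loopless := ⟨fun _ ⟨h, _⟩ => h rfl⟩

open Subgroup Finset in
private lemma zpowers_isCyclic_aux {G : Type*} [Group G] (z : G) : IsCyclic (zpowers z) := by
  refine ⟨⟨z, mem_zpowers z⟩, fun x => ?_⟩
  obtain ⟨k, hk⟩ := x.2
  exact ⟨k, Subtype.ext (by simpa using hk)⟩

open Subgroup Finset in
private lemma mem_zpowers_key {G : Type*} [Group G] {p k l : ℕ} (hp : p.Prime) {g h z : G}
    (hgz : g ∈ zpowers z) (hhz : h ∈ zpowers z)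
    (hog : orderOf g = p ^ k) (hoh : orderOf h = p ^ l) (hkl : k ≤ l)
    (hz : IsOfFinOrder z) : g ∈ zpowers h := by
  classical
  haveI : Finite (zpowers z) := (finite_zpowers.2 hz).to_subtype
  haveI : Fintype (zpowers z) := Fintype.ofFinite _
  haveI := zpowers_isCyclic_aux z
  set g' : zpowers z := ⟨g, hgz⟩
  set h' : zpowers z := ⟨h, hhz⟩
  have hog' : orderOf g' = p ^ k := (Subgroup.orderOf_coe g').symm.trans hog
  have hoh' : orderOf h' = p ^ l := (Subgroup.orderOf_coe h').symm.trans hoh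
  have hcard : Fintype.card (zpowers h') = p ^ l := by
    rw [Fintype.card_zpowers, hoh']
  have hle := IsCyclic.card_pow_eq_one_le (α := zpowers z) (n := p ^ l)
    (pow_pos hp.pos l)
  set S : Finset (zpowers z) := {a : zpowers z | a ^ (p ^ l) = 1}
  have hgS : g' ∈ S := by
    simp only [S, mem_filter, mem_univ, true_and]
    exact orderOf_dvd_iff_pow_eq_one.1 (hog' ▸ pow_dvd_pow p hkl)
  set T : Finset (zpowers z) := (zpowers h' : Set (zpowers z)).toFinset
  have hTS : T ⊆ S := by
    intro x hx
    simp only [T, Set.mem_toFinset, SetLike.mem_coe] at hx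
    simp only [S, mem_filter, mem_univ, true_and]
    exact orderOf_dvd_iff_pow_eq_one.1 ((orderOf_dvd_of_mem_zpowers hx).trans
      (hoh' ▸ dvd_refl _))
  have hTcard : T.card = p ^ l := by
    rw [Set.toFinset_card]; exact hcard
  have hST : T = S := Finset.eq_of_subset_of_card_le hTS (hle.trans hTcard.ge)
  have : g' ∈ zpowers h' := by
    have := hST.symm ▸ hgS
    simpa [T, Set.mem_toFinset] using this
  obtain ⟨m, hm⟩ := this
  exact ⟨m, congrArg Subtype.val hm⟩

open Subgroup in
private lemma adj_of_mem_zpowers {G : Type*} [Group G] {p l : ℕ} (hp : p.Prime) {g h : G}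
    (hoh : orderOf h = p ^ l) (hmem : g ∈ zpowers h) :
    ∃ n : ℤ, n ≠ 0 ∧ g = h ^ n := by
  obtain ⟨m, hm⟩ := hmem
  by_cases hm0 : m = 0
  · refine ⟨(p ^ l : ℕ), by exact_mod_cast (pow_pos hp.pos l).ne', ?_⟩
    have hg1 : g = 1 := by rw [← hm, hm0]; simp
    rw [hg1, zpow_natCast, ← hoh, pow_orderOf_eq_one]
  · exact ⟨m, hm0, hm.symm⟩

/-- For two elements of `p`-power order, adjacency in the power graph coincides with
adjacency in the enhanced power graph. -/
theorem powerGraph_adj_iff_enhanced_adj_of_prime_pow {G : Type*} [Group G] {p : ℕ}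
    (hp : p.Prime) {g h : G} (hg : ∃ k : ℕ, orderOf g = p ^ k)
    (hh : ∃ k : ℕ, orderOf h = p ^ k) :
    (powerGraph G).Adj g h ↔ (enhancedPowerGraph G).Adj g h := by
  constructor
  · rintro ⟨hne, hadj⟩
    refine ⟨hne, ?_⟩
    rcases hadj with ⟨n, -, rfl⟩ | ⟨n, -, rfl⟩
    · exact ⟨g, Subgroup.mem_zpowers g, Subgroup.zpow_mem _ (Subgroup.mem_zpowers g) n⟩
    · exact ⟨h, Subgroup.zpow_mem _ (Subgroup.mem_zpowers h) n, Subgroup.mem_zpowers h⟩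
  · rintro ⟨hne, z, hgz, hhz⟩
    refine ⟨hne, ?_⟩
    obtain ⟨k, hog⟩ := hg
    obtain ⟨l, hoh⟩ := hh
    by_cases hz : IsOfFinOrder z
    · rcases le_total k l with hkl | hlk
      · exact Or.inr (adj_of_mem_zpowers hp hoh
          (mem_zpowers_key hp hgz hhz hog hoh hkl hz))
      · exact Or.inl (adj_of_mem_zpowers hp hog
          (mem_zpowers_key hp hhz hgz hoh hog hlk hz))
    · exfalso
      have hz0 : orderOf z = 0 := orderOf_eq_zero hz
      have triv : ∀ x : G, x ∈ Subgroup.zpowers z → IsOfFinOrder x → x = 1 := by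
        rintro x ⟨i, rfl⟩ hx
        obtain ⟨n, hn, hn1⟩ := hx.exists_pow_eq_one
        have : z ^ (i * (n : ℤ)) = 1 := by
          rw [zpow_mul, zpow_natCast, hn1]
        have hdvd : ((orderOf z : ℤ)) ∣ i * n := orderOf_dvd_iff_zpow_eq_one.2 this
        rw [hz0] at hdvd
        have : i * (n : ℤ) = 0 := zero_dvd_iff.1 (by exact_mod_cast hdvd)
        have hi : i = 0 := by
          rcases mul_eq_zero.1 this with h' | h'
          · exact h'
          · exact absurd (by exact_mod_cast h') hn.ne'
        rw [hi]; simp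
      have hg1 : g = 1 := triv g hgz (by
        rw [← orderOf_pos_iff, hog]; exact pow_pos hp.pos k)
      have hh1 : h = 1 := triv h hhz (by
        rw [← orderOf_pos_iff, hoh]; exact pow_pos hp.pos l)
      exact hne (hg1.trans hh1.symm)
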